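/- Let L = B₊·W₊·B₊ᵀ − B₋·D·B₋ᵀ be the weighted Laplacian of a signed graph on n vertices, where W₊ and D are diagonal with strictly positive entries. Let B₊ = [B_{F₊} B_{C₊}] be a spanning-forest decomposition of B₊ with cut-set matrix R₊ and left inverse B_{F₊}ᴸ = (B_{F₊}ᵀ·B_{F₊})⁻¹·B_{F₊}ᵀ, and let N₊ be an n×c₊ matrix with orthonormal columns spanning the null space of B_{F₊}ᵀ (c₊ = dim null(B₊ᵀ)). Then L is positive semidefinite if and only if the symmetric 3×3 block matrix [[D⁻¹, B₋ᵀ·(B_{F₊}ᴸ)ᵀ, B₋ᵀ·N₊],[B_{F₊}ᴸ·B₋, R₊·W₊·R₊ᵀ, 0],[N₊ᵀ·B₋, 0, 0]] is positive semidefinite. -/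

import Mathlib

open Matrix

/-- `B` is an oriented incidence matrix: every column has exactly one `1`,
exactly one `-1`, and zeros elsewhere. -/
def IsIncidenceMatrix {V E : Type*} (B : Matrix V E ℝ) : Prop :=
  ∀ e : E, ∃ i j : V, i ≠ j ∧ B i e = 1 ∧ B j e = -1 ∧
    ∀ k : V, k ≠ i → k ≠ j → B k e = 0

/-- the signed Laplacian `L = B₊·W₊·B₊ᵀ − B₋·D·B₋ᵀ` is positive semidefinite
iff the 3×3 block matrix
`[[D⁻¹, B₋ᵀ·(B_{F₊}ᴸ)ᵀ, B₋ᵀ·N₊],[B_{F₊}ᴸ·B₋, R₊·W₊·R₊ᵀ, 0],[N₊ᵀ·B₋, 0, 0]]` is. -/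
theorem signed_laplacian_psd_iff_forest_block
    {V Fp Cp Em : Type*} [Fintype V] [Fintype Fp] [Fintype Cp] [Fintype Em]
    [DecidableEq V] [DecidableEq Fp] [DecidableEq Cp] [DecidableEq Em] [Nonempty V]
    (BFp : Matrix V Fp ℝ) (BCp : Matrix V Cp ℝ) (Bm : Matrix V Em ℝ)
    (hBp : IsIncidenceMatrix (Matrix.fromCols BFp BCp))
    (hBm : IsIncidenceMatrix Bm)
    (hInd : LinearIndependent ℝ (fun f : Fp => (fun v : V => BFp v f)))
    (hSpan : ∀ c : Cp, (fun v : V => BCp v c) ∈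
      Submodule.span ℝ (Set.range (fun f : Fp => (fun v : V => BFp v f))))
    (wp : Fp ⊕ Cp → ℝ) (hwp : ∀ e, 0 < wp e)
    (d : Em → ℝ) (hd : ∀ e, 0 < d e)
    (cp : ℕ)
    (hcp : cp = Module.finrank ℝ (LinearMap.ker (Matrix.fromCols BFp BCp)ᵀ.mulVecLin))
    (N : Matrix V (Fin cp) ℝ)
    (hN_orth : Nᵀ * N = 1)
    (hN_span : Submodule.span ℝ (Set.range fun j : Fin cp => (fun v : V => N v j)) =
      LinearMap.ker BFpᵀ.mulVecLin) :
    (Matrix.fromCols BFp BCp * Matrix.diagonal wp * (Matrix.fromCols BFp BCp)ᵀ -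
        Bm * Matrix.diagonal d * Bmᵀ).PosSemidef ↔
      (Matrix.fromBlocks
        (Matrix.diagonal d)⁻¹
        (Matrix.fromCols (Bmᵀ * (((BFpᵀ * BFp)⁻¹ * BFpᵀ)ᵀ)) (Bmᵀ * N))
        (Matrix.fromRows (((BFpᵀ * BFp)⁻¹ * BFpᵀ) * Bm) (Nᵀ * Bm))
        (Matrix.fromBlocks
          ((Matrix.fromCols (1 : Matrix Fp Fp ℝ) ((BFpᵀ * BFp)⁻¹ * BFpᵀ * BCp)) * Matrix.diagonal wp *
            (Matrix.fromCols (1 : Matrix Fp Fp ℝ) ((BFpᵀ * BFp)⁻¹ * BFpᵀ * BCp))ᵀ)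
          0 0 (0 : Matrix (Fin cp) (Fin cp) ℝ))).PosSemidef := by
  classical
  set AL : Matrix Fp V ℝ := (BFpᵀ * BFp)⁻¹ * BFpᵀ with hAL
  set T : Matrix Fp Cp ℝ := AL * BCp with hT
  set Rp : Matrix Fp (Fp ⊕ Cp) ℝ := Matrix.fromCols 1 T with hRp
  set Kt : Matrix (Fp ⊕ Fin cp) V ℝ := Matrix.fromRows AL Nᵀ with hKt
  set P : Matrix V (Fp ⊕ Fin cp) ℝ := Matrix.fromCols BFp N with hP
  set L : Matrix V V ℝ :=
    Matrix.fromCols BFp BCp * Matrix.diagonal wp * (Matrix.fromCols BFp BCp)ᵀ -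
      Bm * Matrix.diagonal d * Bmᵀ with hL
  set S : Matrix (Fp ⊕ Fin cp) (Fp ⊕ Fin cp) ℝ :=
    Matrix.fromBlocks (Rp * Matrix.diagonal wp * Rpᵀ) 0 0 0 with hS
  -- injectivity of BFp on vectors
  have hInj : Function.Injective BFp.mulVec := by
    rw [Matrix.mulVec_injective_iff]
    exact hInd
  -- Gram matrix positive definite
  have hG : (BFpᵀ * BFp).PosDef := by
    have := Matrix.PosDef.conjTranspose_mul_self BFp hInj
    rwa [Matrix.conjTranspose_eq_transpose_of_trivial] at this
  have hGdet : IsUnit (BFpᵀ * BFp).det := hG.det_pos.ne'.isUnit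
  have hALA : AL * BFp = 1 := by
    rw [hAL, Matrix.mul_assoc, Matrix.nonsing_inv_mul _ hGdet]
  have hcolN : ∀ j, BFpᵀ *ᵥ (fun v => N v j) = 0 := by
    intro j
    have hmem : (fun v => N v j) ∈ LinearMap.ker BFpᵀ.mulVecLin := by
      rw [← hN_span]
      exact Submodule.subset_span ⟨j, rfl⟩
    rw [LinearMap.mem_ker, Matrix.mulVecLin_apply] at hmem
    exact hmem
  have hAN : BFpᵀ * N = 0 := by
    ext f j
    have := congrFun (hcolN j) f
    simpa [Matrix.mul_apply, Matrix.mulVec, dotProduct] using this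
  have hNA : Nᵀ * BFp = 0 := by
    have := congrArg Matrix.transpose hAN
    simpa [Matrix.transpose_mul] using this
  have hALN : AL * N = 0 := by
    rw [hAL, Matrix.mul_assoc, hAN, Matrix.mul_zero]
  -- columns of BCp are reproduced
  have hC : BFp * T = BCp := by
    ext v c
    obtain ⟨g, hg⟩ := (Submodule.mem_span_range_iff_exists_fun ℝ).mp (hSpan c)
    have hgv : BFp *ᵥ g = fun u => BCp u c := by
      funext u
      have := congrFun hg u
      simpa [Matrix.mulVec, dotProduct, mul_comm] using this
    have h1 : (fun i => (BFp * T) i c) = BFp *ᵥ (fun f => T f c) := by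
      funext i
      simp [Matrix.mul_apply, Matrix.mulVec, dotProduct]
    have h2 : (fun f => T f c) = AL *ᵥ (fun u => BCp u c) := by
      funext f
      simp [hT, Matrix.mul_apply, Matrix.mulVec, dotProduct]
    have h4 : AL *ᵥ (BFp *ᵥ g) = g := by
      rw [Matrix.mulVec_mulVec, hALA, Matrix.one_mulVec]
    have h3 : (fun i => (BFp * T) i c) = fun u => BCp u c := by
      rw [h1, h2, ← hgv, h4]
    exact congrFun h3 v
  have hBpR : Matrix.fromCols BFp BCp = BFp * Rp := by
    rw [hRp, Matrix.mul_fromCols, Matrix.mul_one, hC]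
  have hKtA : Kt * BFp = Matrix.fromRows 1 0 := by
    rw [hKt, Matrix.fromRows_mul, hALA, hNA]
  have hKtP : Kt * P = 1 := by
    rw [hKt, hP, Matrix.fromRows_mul_fromCols, hALA, hALN, hNA, hN_orth,
      Matrix.fromBlocks_one]
  -- cardinality and two-sided inverse
  have hNinj : Function.Injective N.mulVec := fun x y h => by
    have h2 := congrArg (Nᵀ.mulVec) h
    simpa [Matrix.mulVec_mulVec, hN_orth, Matrix.one_mulVec] using h2
  have hNind : LinearIndependent ℝ (fun j : Fin cp => (fun v : V => N v j)) :=
    Matrix.mulVec_injective_iff.mp hNinj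
  have hker : Module.finrank ℝ (LinearMap.ker BFpᵀ.mulVecLin) = cp := by
    rw [← hN_span, finrank_span_eq_card hNind, Fintype.card_fin]
  have hrank : BFpᵀ.rank = Fintype.card Fp := by
    rw [Matrix.rank_transpose, Matrix.rank, Matrix.range_mulVecLin]
    exact finrank_span_eq_card hInd
  have hcard : Fintype.card V = Fintype.card Fp + cp := by
    have h := LinearMap.finrank_range_add_finrank_ker BFpᵀ.mulVecLin
    rw [hker, Module.finrank_fintype_fun_eq_card] at h
    have h2 : Module.finrank ℝ (LinearMap.range BFpᵀ.mulVecLin) = Fintype.card Fp := hrank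
    rw [h2] at h
    exact h.symm
  have e : V ≃ (Fp ⊕ Fin cp) := Fintype.equivOfCardEq (by simp [hcard])
  have hPK : P * Kt = 1 := by
    rw [hP, hKt]
    refine (Matrix.fromCols_mul_fromRows_eq_one_comm e BFp N AL Nᵀ).mpr ?_
    rw [← hKt, ← hP]
    exact hKtP
  -- key congruence computation
  have hKtAT : BFpᵀ * Ktᵀ = Matrix.fromCols 1 0 := by
    have := congrArg Matrix.transpose hKtA
    simpa [Matrix.transpose_mul, Matrix.transpose_fromRows] using this
  have h1 : Kt * (Matrix.fromCols BFp BCp * Matrix.diagonal wp *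
      (Matrix.fromCols BFp BCp)ᵀ) * Ktᵀ = S := by
    rw [hBpR]
    have hassoc : Kt * (BFp * Rp * Matrix.diagonal wp * (BFp * Rp)ᵀ) * Ktᵀ
        = (Kt * BFp) * (Rp * Matrix.diagonal wp * Rpᵀ) * (BFpᵀ * Ktᵀ) := by
      simp only [Matrix.transpose_mul, Matrix.mul_assoc]
    rw [hassoc, hKtA, hKtAT, hS]
    rw [Matrix.fromRows_mul, Matrix.one_mul, Matrix.zero_mul,
      Matrix.fromRows_mul_fromCols]
    simp
  have h2 : Kt * (Bm * Matrix.diagonal d * Bmᵀ) * Ktᵀ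
      = Kt * Bm * Matrix.diagonal d * Bmᵀ * Ktᵀ := by
    simp only [Matrix.mul_assoc]
  have key1 : Kt * L * Ktᵀ = S - Kt * Bm * Matrix.diagonal d * Bmᵀ * Ktᵀ := by
    rw [hL, Matrix.mul_sub, Matrix.sub_mul, h1, h2]
  -- identify the big block matrix
  have hUR : Matrix.fromCols (Bmᵀ * ALᵀ) (Bmᵀ * N) = Bmᵀ * Ktᵀ := by
    rw [hKt, Matrix.transpose_fromRows, Matrix.transpose_transpose, Matrix.mul_fromCols]
  have hLL : Matrix.fromRows (AL * Bm) (Nᵀ * Bm) = Kt * Bm := by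
    rw [hKt, Matrix.fromRows_mul]
  -- Schur complement
  have hdiagPD : (Matrix.diagonal d).PosDef := Matrix.posDef_diagonal_iff.mpr hd
  have hdinv : ((Matrix.diagonal d)⁻¹).PosDef := hdiagPD.inv
  haveI : Invertible ((Matrix.diagonal d)⁻¹) := hdinv.isUnit.invertible
  have hSchur := Matrix.PosDef.fromBlocks₁₁ (Bmᵀ * Ktᵀ) S hdinv
  have hconj : (Bmᵀ * Ktᵀ)ᴴ = Kt * Bm := by
    rw [Matrix.conjTranspose_eq_transpose_of_trivial, Matrix.transpose_mul,
      Matrix.transpose_transpose, Matrix.transpose_transpose]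
  have hinvinv : ((Matrix.diagonal d)⁻¹)⁻¹ = Matrix.diagonal d :=
    Matrix.nonsing_inv_nonsing_inv _ hdiagPD.det_pos.ne'.isUnit
  rw [hconj, hinvinv] at hSchur
  have hassoc2 : Kt * Bm * Matrix.diagonal d * (Bmᵀ * Ktᵀ)
      = Kt * Bm * Matrix.diagonal d * Bmᵀ * Ktᵀ := by
    simp only [Matrix.mul_assoc]
  rw [hassoc2] at hSchur
  -- congruence invariance of PSD
  have hLKt : L.PosSemidef ↔ (Kt * L * Ktᵀ).PosSemidef := by
    constructor
    · intro h
      have := h.mul_mul_conjTranspose_same Kt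
      rwa [Matrix.conjTranspose_eq_transpose_of_trivial] at this
    · intro h
      have h3 := h.mul_mul_conjTranspose_same P
      rw [Matrix.conjTranspose_eq_transpose_of_trivial] at h3
      have heq : P * (Kt * L * Ktᵀ) * Pᵀ = L := by
        have h4 : P * (Kt * L * Ktᵀ) * Pᵀ = (P * Kt) * (L * (P * Kt)ᵀ) := by
          simp only [Matrix.transpose_mul, Matrix.mul_assoc]
        rw [h4, hPK]
        simp
      rwa [heq] at h3
  rw [hLKt, key1, hUR, hLL, hSchur]
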